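/- For λ ∈ (-1,1), every real symmetric 3×3 matrix Θ satisfying H(λ)ᵀΘ = ΘH(λ) with the 3×3 discrete square-well Hamiltonian H(λ) is of the form Θ₁₁ = Θ₃₃ = a, Θ₁₂ = Θ₂₁ = Θ₂₃ = Θ₃₂ = b, Θ₁₃ = Θ₃₁ = c, Θ₂₂ = (a+c)(1+λ)/(1-λ), for some real a, b, c; conversely every matrix of this form satisfies the relation. -/
import Mathlib


open Matrix Polynomial

/-- The N×N discrete PT-symmetric square-well Hamiltonian (0-indexed). -/
noncomputable def Ham (N : ℕ) (l : ℝ) : Matrix (Fin N) (Fin N) ℝ :=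
  Matrix.of fun i j =>
    if (i : ℕ) = j then 2
    else if (j : ℕ) = (i : ℕ) + 1 then
      (if (i : ℕ) = 0 then -1 - l else if (j : ℕ) = N - 1 then -1 + l else -1)
    else if (i : ℕ) = (j : ℕ) + 1 then
      (if (j : ℕ) = 0 then -1 + l else if (i : ℕ) = N - 1 then -1 - l else -1)
    else 0

theorem stmt10 (l : ℝ) (hl : l ∈ Set.Ioo (-1 : ℝ) 1) (Θ : Matrix (Fin 3) (Fin 3) ℝ) :
    (Θ.IsSymm ∧ (Ham 3 l)ᵀ * Θ = Θ * Ham 3 l) ↔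
    ∃ a b c : ℝ,
      Θ = !![a, b, c;
             b, (a + c) * (1 + l) / (1 - l), b;
             c, b, a] := by
  obtain ⟨hl1, hl2⟩ := hl
  have h1 : (1 : ℝ) - l ≠ 0 := by linarith
  have h2 : (1 : ℝ) + l ≠ 0 := by linarith
  have hH : Ham 3 l = !![2, -1-l, 0; -1+l, 2, -1+l; 0, -1-l, 2] := by
    ext i j
    fin_cases i <;> fin_cases j <;> simp [Ham]
  have hHT : (!![2, -1-l, 0; -1+l, 2, -1+l; 0, -1-l, 2] : Matrix (Fin 3) (Fin 3) ℝ)ᵀ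
      = !![2, -1+l, 0; -1-l, 2, -1-l; 0, -1+l, 2] := by
    ext i j
    fin_cases i <;> fin_cases j <;> rfl
  rw [hH, hHT]
  constructor
  · rintro ⟨hs, h⟩
    have hsym : ∀ i j, Θ j i = Θ i j := fun i j => congrFun (congrFun hs i) j
    refine ⟨Θ 0 0, Θ 0 1, Θ 0 2, ?_⟩
    have h01 := congrFun (congrFun h 0) 1
    have h02 := congrFun (congrFun h 0) 2
    have h12 := congrFun (congrFun h 1) 2
    simp [Matrix.mul_apply, Fin.sum_univ_three] at h01 h02 h12
    have e10 := hsym 0 1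
    have e20 := hsym 0 2
    have e21 := hsym 1 2
    have he : Θ 1 2 = Θ 0 1 := by
      have hz : (l - 1) * (Θ 1 2 - Θ 0 1) = 0 := by linear_combination h02
      rcases mul_eq_zero.mp hz with h' | h'
      · exfalso; apply h1; linarith
      · linarith [sub_eq_zero.mp h']
    have hd : Θ 1 1 = (Θ 0 0 + Θ 0 2) * (1 + l) / (1 - l) := by
      rw [eq_div_iff h1]
      linear_combination -h01
    have hf : Θ 2 2 = Θ 0 0 := by
      have hz : (1 + l) * (Θ 2 2 - Θ 0 0) = 0 := by linear_combination -h12 - h01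
      rcases mul_eq_zero.mp hz with h' | h'
      · exact absurd h' h2
      · linarith [sub_eq_zero.mp h']
    ext i j
    fin_cases i <;> fin_cases j <;>
      simp [e10, e20, e21, he, hd, hf]
  · rintro ⟨a, b, c, rfl⟩
    refine ⟨?_, ?_⟩
    · ext i j
      fin_cases i <;> fin_cases j <;> simp [Matrix.transpose_apply]
    · ext i j
      fin_cases i <;> fin_cases j <;>
        · simp [Matrix.mul_apply, Fin.sum_univ_three]
          first
          | (field_simp; ring)
          | ring
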